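/- Let n ≥ 1 and let S_n be the star graph on vertices {0,1,...,n-1}. The number of partial strong weak endomorphisms of S_n equals 2n^{n-1} + n·2^n − n − 1. -/

import Mathlib

def pmul {V : Type*} (f g : V → Option V) : V → Option V := fun x => (f x).bind g

def pdom {V : Type*} (f : V → Option V) : Set V := {x | f x ≠ none}

def pim {V : Type*} (f : V → Option V) : Set V := {y | ∃ x, f x = some y}

def pker {V : Type*} (f : V → Option V) : V → V → Prop := fun x y => f x ≠ none ∧ f x = f y

def PInj {V : Type*} (f : V → Option V) : Prop := ∀ u v a, f u = some a → f v = some a → u = v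

def edge {n : ℕ} (u v : Fin n) : Prop := (u.val = 0 ∧ v.val ≠ 0) ∨ (v.val = 0 ∧ u.val ≠ 0)

def IsPEnd {n : ℕ} (α : Fin n → Option (Fin n)) : Prop :=
  ∀ u v a b, α u = some a → α v = some b → edge u v → edge a b

def IsPwEnd {n : ℕ} (α : Fin n → Option (Fin n)) : Prop :=
  ∀ u v a b, α u = some a → α v = some b → edge u v → a ≠ b → edge a b

def IsPsEnd {n : ℕ} (α : Fin n → Option (Fin n)) : Prop :=
  ∀ u v a b, α u = some a → α v = some b → (edge u v ↔ edge a b)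

def IsPswEnd {n : ℕ} (α : Fin n → Option (Fin n)) : Prop :=
  ∀ u v a b, α u = some a → α v = some b → ((edge u v ∧ a ≠ b) ↔ edge a b)

def PEndS (n : ℕ) : Set (Fin n → Option (Fin n)) := {α | IsPEnd α}
def PwEndS (n : ℕ) : Set (Fin n → Option (Fin n)) := {α | IsPwEnd α}
def PsEndS (n : ℕ) : Set (Fin n → Option (Fin n)) := {α | IsPsEnd α}
def PswEndS (n : ℕ) : Set (Fin n → Option (Fin n)) := {α | IsPswEnd α}
def IEndS (n : ℕ) : Set (Fin n → Option (Fin n)) := {α | PInj α ∧ IsPEnd α}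
def PAutS (n : ℕ) : Set (Fin n → Option (Fin n)) := {α | PInj α ∧ IsPsEnd α}

def RegularIn {V : Type*} (M : Set (V → Option V)) (a : V → Option V) : Prop :=
  ∃ b ∈ M, pmul (pmul a b) a = a

def GreenL {V : Type*} (M : Set (V → Option V)) (a b : V → Option V) : Prop :=
  (∃ g ∈ M, a = pmul g b) ∧ (∃ g ∈ M, b = pmul g a)

def GreenR {V : Type*} (M : Set (V → Option V)) (a b : V → Option V) : Prop :=
  (∃ g ∈ M, a = pmul b g) ∧ (∃ g ∈ M, b = pmul a g)

def GreenH {V : Type*} (M : Set (V → Option V)) (a b : V → Option V) : Prop :=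
  GreenL M a b ∧ GreenR M a b

def GreenJ {V : Type*} (M : Set (V → Option V)) (a b : V → Option V) : Prop :=
  (∃ g ∈ M, ∃ h ∈ M, a = pmul (pmul g b) h) ∧ (∃ g ∈ M, ∃ h ∈ M, b = pmul (pmul g a) h)

section Star7Aux

open Finset

lemma star7_edge_iff {n : ℕ} [NeZero n] (u v : Fin n) :
    edge u v ↔ (u = 0 ∧ v ≠ 0) ∨ (v = 0 ∧ u ≠ 0) := by
  unfold edge
  constructor
  · rintro (⟨h1, h2⟩ | ⟨h1, h2⟩)
    · exact Or.inl ⟨Fin.ext (by simp [h1]), fun hv => h2 (by simp [hv])⟩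
    · exact Or.inr ⟨Fin.ext (by simp [h1]), fun hu => h2 (by simp [hu])⟩
  · rintro (⟨h1, h2⟩ | ⟨h1, h2⟩)
    · exact Or.inl ⟨by simp [h1], fun hv => h2 (Fin.ext (by simp [hv]))⟩
    · exact Or.inr ⟨by simp [h1], fun hu => h2 (Fin.ext (by simp [hu]))⟩

lemma star7_psw_iff {m : ℕ} (α : Fin (m+1) → Option (Fin (m+1))) :
    IsPswEnd α ↔
      (∀ v : Fin (m+1), v ≠ 0 → ∀ a, α v = some a → a = 0) ∨
      ((∀ v : Fin (m+1), v ≠ 0 → α v ≠ some 0) ∧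
        ((α 0 = none ∨ α 0 = some 0) ∨
          ∃ c : Fin (m+1), c ≠ 0 ∧ α 0 = some c ∧
            ∀ v, v ≠ 0 → ∀ a, α v = some a → a = c)) := by
  constructor
  · intro h
    by_cases hA : ∀ v : Fin (m+1), v ≠ 0 → ∀ a, α v = some a → a = 0
    · exact Or.inl hA
    · push_neg at hA
      obtain ⟨v, hv, a, hva, ha⟩ := hA
      right
      have hnz : ∀ w : Fin (m+1), w ≠ 0 → α w ≠ some 0 := by
        intro w hw hw0
        by_cases hwv : w = v
        · subst hwv; rw [hva] at hw0; exact ha (Option.some_inj.mp hw0)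
        · have hiff := h w v 0 a hw0 hva
          have hedge : edge (0 : Fin (m+1)) a := by
            rw [star7_edge_iff]; exact Or.inl ⟨rfl, ha⟩
          have h2 := hiff.mpr hedge
          rcases (star7_edge_iff w v).mp h2.1 with ⟨h1, _⟩ | ⟨h1, _⟩
          · exact hw h1
          · exact hv h1
      refine ⟨hnz, ?_⟩
      cases h0 : α 0 with
      | none => exact Or.inl (Or.inl rfl)
      | some b =>
        by_cases hb : b = 0
        · exact Or.inl (Or.inr (by rw [hb]))
        · refine Or.inr ⟨b, hb, rfl, ?_⟩
          intro w hw d hwd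
          by_contra hd
          have hiff := (h 0 w b d h0 hwd).mp
            ⟨(star7_edge_iff _ _).mpr (Or.inl ⟨rfl, hw⟩), fun hbd => hd hbd.symm⟩
          rcases (star7_edge_iff b d).mp hiff with ⟨h1, _⟩ | ⟨h1, _⟩
          · exact hb h1
          · exact hnz w hw (hwd.trans (by rw [h1]))
  · intro hc u v a b hu hv
    rw [star7_edge_iff, star7_edge_iff]
    rcases hc with hA | ⟨hnz, (h0 | h0) | ⟨c, hc0, hcα, hall⟩⟩
    · by_cases hu0 : u = 0 <;> by_cases hv0 : v = 0
      · subst hu0; subst hv0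
        have hab : a = b := by rw [hu] at hv; exact Option.some_inj.mp hv
        simp [hab]
      · have hb : b = 0 := hA v hv0 b hv
        subst hu0
        simp [hv0, hb, eq_comm]
      · have ha : a = 0 := hA u hu0 a hu
        subst hv0
        simp [hu0, ha, eq_comm]
      · have ha : a = 0 := hA u hu0 a hu
        have hb : b = 0 := hA v hv0 b hv
        simp [hu0, hv0, ha, hb]
    · -- α 0 = none, so u,v ≠ 0
      have hu0 : u ≠ 0 := fun h' => by rw [h', h0] at hu; exact nomatch hu
      have hv0 : v ≠ 0 := fun h' => by rw [h', h0] at hv; exact nomatch hv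
      have ha : a ≠ 0 := fun h' => hnz u hu0 (by rw [hu, h'])
      have hb : b ≠ 0 := fun h' => hnz v hv0 (by rw [hv, h'])
      simp [hu0, hv0, ha, hb]
    · -- α 0 = some 0
      by_cases hu0 : u = 0 <;> by_cases hv0 : v = 0
      · subst hu0; subst hv0
        have hab : a = b := by rw [hu] at hv; exact Option.some_inj.mp hv
        simp [hab]
      · have ha : a = 0 := by
          subst hu0; rw [h0] at hu; exact (Option.some_inj.mp hu).symm
        have hb : b ≠ 0 := fun h' => hnz v hv0 (by rw [hv, h'])
        subst hu0
        simp [hv0, ha, hb, eq_comm]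
      · have hb : b = 0 := by
          subst hv0; rw [h0] at hv; exact (Option.some_inj.mp hv).symm
        have ha : a ≠ 0 := fun h' => hnz u hu0 (by rw [hu, h'])
        subst hv0
        simp [hu0, ha, hb, eq_comm]
      · have ha : a ≠ 0 := fun h' => hnz u hu0 (by rw [hu, h'])
        have hb : b ≠ 0 := fun h' => hnz v hv0 (by rw [hv, h'])
        simp [hu0, hv0, ha, hb]
    · -- α 0 = some c, c ≠ 0, all leaf images = c
      have ha : a = c := by
        by_cases hu0 : u = 0
        · subst hu0; rw [hcα] at hu; exact (Option.some_inj.mp hu).symm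
        · exact hall u hu0 a hu
      have hb : b = c := by
        by_cases hv0 : v = 0
        · subst hv0; rw [hcα] at hv; exact (Option.some_inj.mp hv).symm
        · exact hall v hv0 b hv
      simp [ha, hb, hc0]

end Star7Aux

section Star7Aux2

open Finset

variable {m : ℕ}

def star7sA (m : ℕ) : Fin (m+1) → Finset (Option (Fin (m+1))) :=
  fun i => if i = 0 then Finset.univ else {none, some 0}

def star7sB (m : ℕ) : Fin (m+1) → Finset (Option (Fin (m+1))) :=
  fun i => if i = 0 then {none, some 0}
           else insert none ((Finset.univ.filter (fun x => x ≠ (0 : Fin (m+1)))).image some)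

def star7sB0 (m : ℕ) : Fin (m+1) → Finset (Option (Fin (m+1))) :=
  fun i => if i = 0 then {none, some 0} else {none}

def star7sC (m : ℕ) (c : Fin (m+1)) : Fin (m+1) → Finset (Option (Fin (m+1))) :=
  fun i => if i = 0 then {some c} else {none, some c}

def star7sC0 (m : ℕ) (c : Fin (m+1)) : Fin (m+1) → Finset (Option (Fin (m+1))) :=
  fun i => if i = 0 then {some c} else {none}

def star7FA (m : ℕ) : Finset (Fin (m+1) → Option (Fin (m+1))) := Fintype.piFinset (star7sA m)
def star7FB (m : ℕ) : Finset (Fin (m+1) → Option (Fin (m+1))) :=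
  Fintype.piFinset (star7sB m) \ Fintype.piFinset (star7sB0 m)
def star7FC (m : ℕ) : Finset (Fin (m+1) → Option (Fin (m+1))) :=
  (Finset.univ.filter (fun c => c ≠ (0:Fin (m+1)))).biUnion
    (fun c => Fintype.piFinset (star7sC m c) \ Fintype.piFinset (star7sC0 m c))

lemma star7_mem_pi_ite {β : Type*} [DecidableEq β] (A B : Finset β) (f : Fin (m+1) → β) :
    f ∈ Fintype.piFinset (fun i => if i = 0 then A else B) ↔
      f 0 ∈ A ∧ ∀ i, i ≠ 0 → f i ∈ B := by
  rw [Fintype.mem_piFinset]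
  constructor
  · intro h
    refine ⟨by simpa using h 0, fun i hi => by simpa [hi] using h i⟩
  · rintro ⟨h0, h⟩ i
    by_cases hi : i = 0
    · simpa [hi] using h0
    · simpa [hi] using h i hi

lemma star7_prod_card_ite (A B : Finset (Option (Fin (m+1)))) :
    ∏ i : Fin (m+1), (if i = 0 then A else B).card = A.card * B.card ^ m := by
  rw [Fin.prod_univ_succ]
  simp [Fin.succ_ne_zero]

lemma star7_mem_FA (α : Fin (m+1) → Option (Fin (m+1))) :
    α ∈ star7FA m ↔ ∀ i, i ≠ 0 → α i = none ∨ α i = some 0 := by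
  rw [star7FA]; unfold star7sA; rw [star7_mem_pi_ite]
  simp

lemma star7_mem_piB (α : Fin (m+1) → Option (Fin (m+1))) :
    α ∈ Fintype.piFinset (star7sB m) ↔
      (α 0 = none ∨ α 0 = some 0) ∧
        ∀ i, i ≠ 0 → α i = none ∨ ∃ a, a ≠ 0 ∧ α i = some a := by
  unfold star7sB; rw [star7_mem_pi_ite]
  simp [eq_comm]

lemma star7_mem_piB0 (α : Fin (m+1) → Option (Fin (m+1))) :
    α ∈ Fintype.piFinset (star7sB0 m) ↔
      (α 0 = none ∨ α 0 = some 0) ∧ ∀ i, i ≠ 0 → α i = none := by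
  unfold star7sB0; rw [star7_mem_pi_ite]
  simp

lemma star7_mem_piC (c : Fin (m+1)) (α : Fin (m+1) → Option (Fin (m+1))) :
    α ∈ Fintype.piFinset (star7sC m c) ↔
      α 0 = some c ∧ ∀ i, i ≠ 0 → α i = none ∨ α i = some c := by
  unfold star7sC; rw [star7_mem_pi_ite]
  simp

lemma star7_mem_piC0 (c : Fin (m+1)) (α : Fin (m+1) → Option (Fin (m+1))) :
    α ∈ Fintype.piFinset (star7sC0 m c) ↔
      α 0 = some c ∧ ∀ i, i ≠ 0 → α i = none := by
  unfold star7sC0; rw [star7_mem_pi_ite]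
  simp

lemma star7_set_eq (m : ℕ) :
    PswEndS (m+1) = ↑(star7FA m ∪ star7FB m ∪ star7FC m) := by
  ext α
  simp only [PswEndS, Set.mem_setOf_eq, Finset.coe_union, Set.mem_union, Finset.mem_coe]
  rw [star7_psw_iff]
  constructor
  · rintro (hA | ⟨hnz, (h0 | h0) | ⟨c, hc0, hcα, hall⟩⟩)
    · left; left
      rw [star7_mem_FA]
      intro i hi
      cases hαi : α i with
      | none => exact Or.inl rfl
      | some a => exact Or.inr (by rw [hA i hi a hαi])
    · -- α 0 = none
      by_cases hnone : ∀ i : Fin (m+1), i ≠ 0 → α i = none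
      · left; left; rw [star7_mem_FA]; exact fun i hi => Or.inl (hnone i hi)
      · left; right
        rw [star7FB, Finset.mem_sdiff, star7_mem_piB, star7_mem_piB0]
        refine ⟨⟨Or.inl h0, fun i hi => ?_⟩, fun h => hnone fun i hi => h.2 i hi⟩
        cases hαi : α i with
        | none => exact Or.inl rfl
        | some a =>
          refine Or.inr ⟨a, fun ha => hnz i hi (by rw [hαi, ha]), rfl⟩
    · by_cases hnone : ∀ i : Fin (m+1), i ≠ 0 → α i = none
      · left; left; rw [star7_mem_FA]; exact fun i hi => Or.inl (hnone i hi)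
      · left; right
        rw [star7FB, Finset.mem_sdiff, star7_mem_piB, star7_mem_piB0]
        refine ⟨⟨Or.inr h0, fun i hi => ?_⟩, fun h => hnone fun i hi => h.2 i hi⟩
        cases hαi : α i with
        | none => exact Or.inl rfl
        | some a =>
          refine Or.inr ⟨a, fun ha => hnz i hi (by rw [hαi, ha]), rfl⟩
    · by_cases hnone : ∀ i : Fin (m+1), i ≠ 0 → α i = none
      · left; left; rw [star7_mem_FA]; exact fun i hi => Or.inl (hnone i hi)
      · right
        rw [star7FC, Finset.mem_biUnion]
        refine ⟨c, by simp [hc0], ?_⟩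
        rw [Finset.mem_sdiff, star7_mem_piC, star7_mem_piC0]
        refine ⟨⟨hcα, fun i hi => ?_⟩, fun h => hnone fun i hi => h.2 i hi⟩
        cases hαi : α i with
        | none => exact Or.inl rfl
        | some a => exact Or.inr (by rw [hall i hi a hαi])
  · rintro ((hFA | hFB) | hFC)
    · rw [star7_mem_FA] at hFA
      left
      intro v hv a hva
      rcases hFA v hv with h | h
      · rw [hva] at h; exact nomatch h
      · rw [hva] at h; exact Option.some_inj.mp h
    · rw [star7FB, Finset.mem_sdiff, star7_mem_piB] at hFB
      obtain ⟨⟨h0, hleaf⟩, -⟩ := hFB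
      right
      refine ⟨fun v hv hv0 => ?_, Or.inl h0⟩
      rcases hleaf v hv with h | ⟨a, ha, h⟩
      · rw [hv0] at h; exact nomatch h
      · rw [hv0] at h; exact ha (Option.some_inj.mp h).symm
    · rw [star7FC, Finset.mem_biUnion] at hFC
      obtain ⟨c, hc, hmem⟩ := hFC
      rw [Finset.mem_sdiff, star7_mem_piC] at hmem
      obtain ⟨⟨h0, hleaf⟩, -⟩ := hmem
      have hc0 : c ≠ 0 := by simpa using hc
      right
      constructor
      · intro v hv hv0
        rcases hleaf v hv with h | h
        · rw [hv0] at h; exact nomatch h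
        · rw [hv0] at h; exact hc0 (Option.some_inj.mp h).symm
      · refine Or.inr ⟨c, hc0, h0, fun v hv a hva => ?_⟩
        rcases hleaf v hv with h | h
        · rw [hva] at h; exact nomatch h
        · rw [hva] at h; exact Option.some_inj.mp h

end Star7Aux2

section Star7Aux3

open Finset

variable {m : ℕ}

lemma star7_card_two (c : Fin (m+1)) :
    ({none, some c} : Finset (Option (Fin (m+1)))).card = 2 := by
  rw [Finset.card_insert_of_notMem (by simp), Finset.card_singleton]

lemma star7_card_leafB :
    ((insert none ((Finset.univ.filter (fun x => x ≠ (0 : Fin (m+1)))).image some)) :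
      Finset (Option (Fin (m+1)))).card = m + 1 := by
  rw [Finset.card_insert_of_notMem (by simp),
    Finset.card_image_of_injective _ (Option.some_injective _),
    Finset.filter_ne', Finset.card_erase_of_mem (Finset.mem_univ _), Finset.card_univ]
  simp

lemma star7_card_FA : (star7FA m).card = (m+2) * 2^m := by
  rw [star7FA, Fintype.card_piFinset]
  unfold star7sA
  rw [star7_prod_card_ite, star7_card_two, Finset.card_univ]
  simp [Fintype.card_option]

lemma star7_card_FB : (star7FB m).card = 2 * (m+1)^m - 2 := by
  have hsub : Fintype.piFinset (star7sB0 m) ⊆ Fintype.piFinset (star7sB m) := by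
    refine Fintype.piFinset_subset _ _ fun i => ?_
    unfold star7sB star7sB0
    by_cases hi : i = 0 <;> simp [hi]
  rw [star7FB, Finset.card_sdiff_of_subset hsub, Fintype.card_piFinset, Fintype.card_piFinset]
  unfold star7sB star7sB0
  rw [star7_prod_card_ite, star7_prod_card_ite, star7_card_two, star7_card_leafB,
    Finset.card_singleton]
  simp

lemma star7_card_FC : (star7FC m).card = m * (2^m - 1) := by
  have hdisj : ∀ c ∈ Finset.univ.filter (fun c => c ≠ (0:Fin (m+1))),
      ∀ d ∈ Finset.univ.filter (fun c => c ≠ (0:Fin (m+1))), c ≠ d →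
      Disjoint (Fintype.piFinset (star7sC m c) \ Fintype.piFinset (star7sC0 m c))
        (Fintype.piFinset (star7sC m d) \ Fintype.piFinset (star7sC0 m d)) := by
    intro c _ d _ hcd
    rw [Finset.disjoint_left]
    intro α hc hd
    have h1 := ((star7_mem_piC c α).mp (Finset.mem_sdiff.mp hc).1).1
    have h2 := ((star7_mem_piC d α).mp (Finset.mem_sdiff.mp hd).1).1
    rw [h1] at h2
    exact hcd (Option.some_inj.mp h2)
  rw [star7FC, Finset.card_biUnion hdisj]
  have hcard : ∀ c ∈ Finset.univ.filter (fun c => c ≠ (0:Fin (m+1))),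
      (Fintype.piFinset (star7sC m c) \ Fintype.piFinset (star7sC0 m c)).card = 2^m - 1 := by
    intro c _
    have hsub : Fintype.piFinset (star7sC0 m c) ⊆ Fintype.piFinset (star7sC m c) := by
      refine Fintype.piFinset_subset _ _ fun i => ?_
      unfold star7sC star7sC0
      by_cases hi : i = 0 <;> simp [hi]
    rw [Finset.card_sdiff_of_subset hsub, Fintype.card_piFinset, Fintype.card_piFinset]
    unfold star7sC star7sC0
    rw [star7_prod_card_ite, star7_prod_card_ite, star7_card_two,
      Finset.card_singleton, Finset.card_singleton]
    simp
  rw [Finset.sum_congr rfl hcard, Finset.sum_const, smul_eq_mul]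
  congr 1
  rw [Finset.filter_ne', Finset.card_erase_of_mem (Finset.mem_univ _), Finset.card_univ]
  simp

lemma star7_disj_AB : Disjoint (star7FA m) (star7FB m) := by
  rw [Finset.disjoint_left]
  intro α hA hB
  rw [star7_mem_FA] at hA
  rw [star7FB, Finset.mem_sdiff] at hB
  obtain ⟨hB1, hB0⟩ := hB
  have hB1' := (star7_mem_piB α).mp hB1
  apply hB0
  rw [star7_mem_piB0]
  refine ⟨hB1'.1, fun i hi => ?_⟩
  rcases hA i hi with h | h
  · exact h
  · rcases hB1'.2 i hi with h' | ⟨a, ha, h'⟩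
    · exact h'
    · rw [h] at h'
      exact absurd (Option.some_inj.mp h').symm ha

lemma star7_disj_ABC : Disjoint (star7FA m ∪ star7FB m) (star7FC m) := by
  rw [Finset.disjoint_left]
  intro α hAB hC
  rw [star7FC, Finset.mem_biUnion] at hC
  obtain ⟨c, hc, hmem⟩ := hC
  have hc0 : c ≠ 0 := by simpa using hc
  rw [Finset.mem_sdiff] at hmem
  obtain ⟨hC1, hC0⟩ := hmem
  have hC1' := (star7_mem_piC c α).mp hC1
  rcases Finset.mem_union.mp hAB with hA | hB
  · rw [star7_mem_FA] at hA
    apply hC0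
    rw [star7_mem_piC0]
    refine ⟨hC1'.1, fun i hi => ?_⟩
    rcases hA i hi with h | h
    · exact h
    · rcases hC1'.2 i hi with h' | h'
      · exact h'
      · rw [h] at h'
        exact absurd (Option.some_inj.mp h').symm hc0
  · rw [star7FB, Finset.mem_sdiff, star7_mem_piB] at hB
    rcases hB.1.1 with h | h
    · rw [hC1'.1] at h; exact nomatch h
    · rw [hC1'.1] at h; exact hc0 (Option.some_inj.mp h)

end Star7Aux3


theorem stmt7 (n : ℕ) (hn : 1 ≤ n) :
    (PswEndS n).ncard = 2 * n ^ (n - 1) + n * 2 ^ n - n - 1 := by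
  obtain ⟨m, rfl⟩ : ∃ m, n = m + 1 := ⟨n - 1, (Nat.succ_pred_eq_of_pos hn).symm⟩
  rw [star7_set_eq, Set.ncard_coe_finset,
    Finset.card_union_of_disjoint star7_disj_ABC,
    Finset.card_union_of_disjoint star7_disj_AB,
    star7_card_FA, star7_card_FB, star7_card_FC]
  have h1 : 1 ≤ (m+1)^m := Nat.one_le_pow _ _ (by omega)
  have h2 : 1 ≤ 2^m := Nat.one_le_pow _ _ (by omega)
  have e1 : m * (2^m - 1) = m * 2^m - m := by rw [Nat.mul_sub, Nat.mul_one]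
  have e2 : (m+2) * 2^m = m * 2^m + 2 * 2^m := by ring
  have e3 : (m+1) * 2^(m+1) = 2 * (m * 2^m) + 2 * 2^m := by ring
  have hc : m ≤ m * 2^m := Nat.le_mul_of_pos_right m (by omega)
  simp only [Nat.add_sub_cancel]
  rw [e1, e2, e3]
  set a := (m+1)^m
  set b := 2^m
  set c := m * b
  omega
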